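/- Let Ω be an open subset of ℝⁿ and let (f_m) be a sequence of functions ℝⁿ → ℝ, each differentiable at every point of Ω, such that (f_m) is uniformly Cauchy on Ω and the derivatives are Cauchy in the Lebesgue-essential-supremum sense: essSup_{Ω} ‖∇f_m − ∇f_l‖ → 0 as m, l → ∞ (essential supremum with respect to Lebesgue measure restricted to Ω). Let f be the uniform limit of (f_m). Then f is differentiable at every point of Ω, and moreover f_m → f and ∇f_m → ∇f uniformly on Ω. -/

import Mathlib

open MeasureTheory Filter ENNReal NNReal Topology

/-- `W^{1,∞}` convergence preserves everywhere differentiability: if `(f_m)` are everywhere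
differentiable on an open set `Ω ⊆ ℝⁿ`, `(f_m)` is uniformly Cauchy on `Ω`, the derivatives are
Cauchy in the Lebesgue-essential-supremum sense, and `f` is the uniform limit of `(f_m)`, then
`f` is differentiable at every point of `Ω` and `f_m → f`, `∇f_m → ∇f` uniformly on `Ω`. -/

lemma fubini_lines {n : ℕ} {N : Set (EuclideanSpace ℝ (Fin n))} (hN : MeasurableSet N)
    (h0 : volume N = 0) (c d : EuclideanSpace ℝ (Fin n)) :
    ∀ᵐ z : EuclideanSpace ℝ (Fin n), ∀ᵐ t : ℝ, z + (c + t • d) ∉ N := by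
  have hcont : Continuous fun x : (EuclideanSpace ℝ (Fin n)) × ℝ => x.1 + (c + x.2 • d) :=
    continuous_fst.add (continuous_const.add (continuous_snd.smul continuous_const))
  have hmeas : MeasurableSet {x : (EuclideanSpace ℝ (Fin n)) × ℝ |
      x.1 + (c + x.2 • d) ∉ N} := (hcont.measurable hN).compl
  rw [MeasureTheory.Measure.ae_ae_comm hmeas]
  refine Filter.Eventually.of_forall fun t => ?_
  have : {z : EuclideanSpace ℝ (Fin n) | z + (c + t • d) ∈ N} = (· + (c + t • d)) ⁻¹' N := rfl
  rw [ae_iff]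
  simpa [this] using measure_preimage_add_right (volume : Measure (EuclideanSpace ℝ (Fin n))) (c + t • d) N ▸ h0

lemma segment_est {n : ℕ} {g : EuclideanSpace ℝ (Fin n) → ℝ} {a d : EuclideanSpace ℝ (Fin n)}
    {C : ℝ} (hC : 0 ≤ C)
    (hdiff : ∀ t ∈ Set.Icc (0:ℝ) 1, DifferentiableAt ℝ g (a + t • d))
    (hae : ∀ᵐ t : ℝ, t ∈ Set.Ioc (0:ℝ) 1 → ‖fderiv ℝ g (a + t • d)‖ ≤ C) :
    |g (a + d) - g a| ≤ C * ‖d‖ := by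
  set h : ℝ → ℝ := fun t => g (a + t • d) with hh_def
  have hγ : ∀ t : ℝ, HasDerivAt (fun s : ℝ => a + s • d) d t := by
    intro t
    simpa using ((hasDerivAt_id t).smul_const d).const_add a
  have hh : ∀ t ∈ Set.Icc (0:ℝ) 1, HasDerivAt h ((fderiv ℝ g (a + t • d)) d) t := by
    intro t ht
    exact ((hdiff t ht).hasFDerivAt.comp_hasDerivAt t (hγ t))
  have hderiv_eq : ∀ t ∈ Set.Icc (0:ℝ) 1, deriv h t = (fderiv ℝ g (a + t • d)) d :=
    fun t ht => (hh t ht).deriv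
  have hh' : ∀ t ∈ Set.uIcc (0:ℝ) 1, HasDerivAt h (deriv h t) t := by
    intro t ht
    rw [Set.uIcc_of_le zero_le_one] at ht
    rw [hderiv_eq t ht]
    exact hh t ht
  have hmeas : Measurable (deriv h) := measurable_deriv h
  have haebd : ∀ᵐ t ∂(volume.restrict (Set.Ioc (0:ℝ) 1)), ‖deriv h t‖ ≤ C * ‖d‖ := by
    filter_upwards [ae_restrict_mem measurableSet_Ioc, ae_restrict_of_ae hae] with t ht hbd
    rw [hderiv_eq t (Set.Ioc_subset_Icc_self ht)]
    calc ‖(fderiv ℝ g (a + t • d)) d‖ ≤ ‖fderiv ℝ g (a + t • d)‖ * ‖d‖ :=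
          (fderiv ℝ g (a + t • d)).le_opNorm d
      _ ≤ C * ‖d‖ := by gcongr; exact hbd ht
  have hint : IntervalIntegrable (deriv h) volume 0 1 := by
    rw [intervalIntegrable_iff, Set.uIoc_of_le zero_le_one]
    refine ⟨hmeas.aestronglyMeasurable.restrict, ?_⟩
    exact HasFiniteIntegral.restrict_of_bounded (C := C * ‖d‖) (by simp) haebd
  have hftc := intervalIntegral.integral_eq_sub_of_hasDerivAt hh' hint
  have hb : ‖∫ t in (0:ℝ)..1, deriv h t‖ ≤ C * ‖d‖ := by
    have := intervalIntegral.norm_integral_le_abs_of_norm_le (μ := volume) (a := (0:ℝ)) (b := 1)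
      (g := fun _ => C * ‖d‖) (f := deriv h)
      (by rw [Set.uIoc_of_le zero_le_one]; exact haebd) (intervalIntegrable_const)
    simpa [abs_of_nonneg (mul_nonneg hC (norm_nonneg d))] using this
  rw [hftc] at hb
  have h1 : h 1 = g (a + d) := by simp [hh_def]
  have h0 : h 0 = g a := by simp [hh_def]
  rw [h1, h0] at hb
  simpa [Real.norm_eq_abs] using hb

lemma lip_est {n : ℕ} {Ω : Set (EuclideanSpace ℝ (Fin n))} (hΩ : IsOpen Ω)
    {g : EuclideanSpace ℝ (Fin n) → ℝ} (hg : ∀ x ∈ Ω, DifferentiableAt ℝ g x)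
    {C : ℝ} (hC : 0 ≤ C) (hae : ∀ᵐ x ∂(volume.restrict Ω), ‖fderiv ℝ g x‖ ≤ C)
    {y w : EuclideanSpace ℝ (Fin n)} (hy : y ∈ Ω) (hw : w ∈ Ω)
    (hseg : segment ℝ y w ⊆ Ω) : |g w - g y| ≤ C * ‖w - y‖ := by
  classical
  have hmeas0 : MeasurableSet {u : EuclideanSpace ℝ (Fin n) | C < ‖fderiv ℝ g u‖} :=
    measurableSet_lt measurable_const (measurable_fderiv ℝ g).norm
  set N : Set (EuclideanSpace ℝ (Fin n)) := {u | C < ‖fderiv ℝ g u‖} ∩ Ω with hN_def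
  have hNmeas : MeasurableSet N := hmeas0.inter hΩ.measurableSet
  have hN0 : volume N = 0 := by
    rw [ae_iff] at hae
    have heqset : {a : EuclideanSpace ℝ (Fin n) | ¬‖fderiv ℝ g a‖ ≤ C} = {u | C < ‖fderiv ℝ g u‖} := by
      ext u; simp [not_le]
    rw [heqset, Measure.restrict_apply hmeas0] at hae
    exact hae
  set d : EuclideanSpace ℝ (Fin n) := w - y with hd_def
  refine le_of_forall_pos_le_add ?_
  intro ε hε
  have hsegc : IsCompact (segment ℝ y w) := by
    rw [segment_eq_image']
    exact isCompact_Icc.image (by fun_prop)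
  obtain ⟨δ, hδpos, hδ⟩ := hsegc.exists_thickening_subset_open hΩ hseg
  have hcy : Tendsto (fun z : EuclideanSpace ℝ (Fin n) => g (y + z)) (𝓝 0) (𝓝 (g y)) :=
    ((hg y hy).continuousAt).tendsto.comp
      ((continuous_const.add continuous_id).tendsto' 0 y (by simp))
  have hcw : Tendsto (fun z : EuclideanSpace ℝ (Fin n) => g (w + z)) (𝓝 0) (𝓝 (g w)) :=
    ((hg w hw).continuousAt).tendsto.comp
      ((continuous_const.add continuous_id).tendsto' 0 w (by simp))
  have h1 : ∀ᶠ z : EuclideanSpace ℝ (Fin n) in 𝓝 0, |g (y + z) - g y| < ε/2 := by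
    have := Metric.tendsto_nhds.mp hcy (ε/2) (by positivity)
    simpa [Real.dist_eq] using this
  have h2 : ∀ᶠ z : EuclideanSpace ℝ (Fin n) in 𝓝 0, |g (w + z) - g w| < ε/2 := by
    have := Metric.tendsto_nhds.mp hcw (ε/2) (by positivity)
    simpa [Real.dist_eq] using this
  obtain ⟨δy, hδy, hy'⟩ := Metric.eventually_nhds_iff_ball.mp h1
  obtain ⟨δw, hδw, hw'⟩ := Metric.eventually_nhds_iff_ball.mp h2
  set δ' := min δ (min δy δw) with hδ'_def
  have hδ'pos : 0 < δ' := lt_min hδpos (lt_min hδy hδw)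
  have hfub := fubini_lines hNmeas hN0 y d
  have hball : 0 < volume (Metric.ball (0:EuclideanSpace ℝ (Fin n)) δ') := Metric.measure_ball_pos _ _ hδ'pos
  have hex : ∃ z ∈ Metric.ball (0:EuclideanSpace ℝ (Fin n)) δ', ∀ᵐ t : ℝ, z + (y + t • d) ∉ N := by
    by_contra hcon
    push_neg at hcon
    have hsub : Metric.ball (0:EuclideanSpace ℝ (Fin n)) δ' ⊆ {z | ¬ ∀ᵐ t : ℝ, z + (y + t • d) ∉ N} :=
      fun z hz => hcon z hz
    have : volume {z : EuclideanSpace ℝ (Fin n) | ¬ ∀ᵐ t : ℝ, z + (y + t • d) ∉ N} = 0 := by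
      rw [← ae_iff]; exact hfub
    exact absurd (measure_mono_null hsub this) hball.ne'
  obtain ⟨z, hzball, hzgood⟩ := hex
  have hznorm : ‖z‖ < δ' := by simpa using hzball
  -- all points of the translated segment lie in Ω
  have hmemΩ : ∀ t ∈ Set.Icc (0:ℝ) 1, (y + z) + t • d ∈ Ω := by
    intro t ht
    apply hδ
    rw [Metric.mem_thickening_iff]
    refine ⟨y + t • d, ?_, ?_⟩
    · rw [segment_eq_image']
      exact ⟨t, ht, rfl⟩
    · have : (y + z) + t • d - (y + t • d) = z := by abel
      rw [dist_eq_norm, this]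
      exact hznorm.trans_le (min_le_left _ _)
  have hkey := segment_est (g := g) (a := y + z) (d := d) (C := C) hC
    (fun t ht => hg _ (hmemΩ t ht)) ?_
  · have hyz : (y + z) + d = w + z := by rw [hd_def]; abel
    rw [hyz] at hkey
    have hzy : z ∈ Metric.ball (0:EuclideanSpace ℝ (Fin n)) δy := by
      simpa using hznorm.trans_le ((min_le_right _ _).trans (min_le_left _ _))
    have hzw : z ∈ Metric.ball (0:EuclideanSpace ℝ (Fin n)) δw := by
      simpa using hznorm.trans_le ((min_le_right _ _).trans (min_le_right _ _))
    have hy2 : |g (y + z) - g y| < ε/2 := hy' z hzy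
    have hw2 : |g (w + z) - g w| < ε/2 := hw' z hzw
    have : |g w - g y| ≤ |g (w + z) - g w| + |g (w + z) - g (y + z)| + |g (y + z) - g y| := by
      have : g w - g y = -(g (w + z) - g w) + (g (w + z) - g (y + z)) + (g (y + z) - g y) := by
        ring
      rw [this]
      calc |(-(g (w + z) - g w) + (g (w + z) - g (y + z))) + (g (y + z) - g y)|
          ≤ |(-(g (w + z) - g w) + (g (w + z) - g (y + z)))| + |g (y + z) - g y| := abs_add_le _ _
        _ ≤ (|(-(g (w + z) - g w))| + |g (w + z) - g (y + z)|) + |g (y + z) - g y| := by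
            gcongr; exact abs_add_le _ _
        _ = |g (w + z) - g w| + |g (w + z) - g (y + z)| + |g (y + z) - g y| := by
            rw [abs_neg]
    calc |g w - g y| ≤ |g (w + z) - g w| + |g (w + z) - g (y + z)| + |g (y + z) - g y| := this
      _ ≤ ε/2 + C * ‖d‖ + ε/2 := add_le_add (add_le_add hw2.le hkey) hy2.le
      _ = C * ‖w - y‖ + ε := by rw [hd_def]; ring
  · filter_upwards [hzgood] with t hnot hIoc
    have hmem : (y + z) + t • d ∈ Ω := hmemΩ t (Set.Ioc_subset_Icc_self hIoc)
    have heq : z + (y + t • d) = (y + z) + t • d := by abel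
    rw [heq] at hnot
    by_contra hlt
    exact hnot ⟨not_le.mp hlt, hmem⟩
lemma fderiv_bound {n : ℕ} {Ω : Set (EuclideanSpace ℝ (Fin n))} (hΩ : IsOpen Ω)
    {g : EuclideanSpace ℝ (Fin n) → ℝ} (hg : ∀ x ∈ Ω, DifferentiableAt ℝ g x)
    {C : ℝ} (hC : 0 ≤ C) (hae : ∀ᵐ x ∂(volume.restrict Ω), ‖fderiv ℝ g x‖ ≤ C)
    {x : EuclideanSpace ℝ (Fin n)} (hx : x ∈ Ω) : ‖fderiv ℝ g x‖ ≤ C := by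
  obtain ⟨r, hr, hball⟩ := Metric.isOpen_iff.mp hΩ x hx
  refine ContinuousLinearMap.opNorm_le_bound _ hC fun d => ?_
  by_cases hd : d = 0
  · simp [hd]
  have hγ : ∀ t : ℝ, HasDerivAt (fun s : ℝ => x + s • d) d t := by
    intro t
    simpa using ((hasDerivAt_id t).smul_const d).const_add x
  have hder : HasDerivAt (fun t : ℝ => g (x + t • d)) ((fderiv ℝ g x) d) 0 := by
    have h0 : x + (0:ℝ) • d = x := by simp
    have hF : HasFDerivAt g (fderiv ℝ g x) (x + (0:ℝ) • d) := by
      rw [h0]; exact (hg x hx).hasFDerivAt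
    exact hF.comp_hasDerivAt 0 (hγ 0)
  rw [hasDerivAt_iff_tendsto_slope] at hder
  have hdpos : 0 < ‖d‖ := norm_pos_iff.mpr hd
  have hev : ∀ᶠ t : ℝ in 𝓝[≠] 0, |slope (fun t : ℝ => g (x + t • d)) 0 t| ≤ C * ‖d‖ := by
    have hsmall : ∀ᶠ t : ℝ in 𝓝 (0:ℝ), |t| < r / ‖d‖ := by
      have : Tendsto (fun t : ℝ => |t|) (𝓝 0) (𝓝 |0|) := (continuous_abs).tendsto 0
      simp only [abs_zero] at this
      exact this.eventually_lt_const (by positivity)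
    filter_upwards [nhdsWithin_le_nhds hsmall, self_mem_nhdsWithin] with t ht (htne : t ≠ 0)
    have hxt : x + t • d ∈ Metric.ball x r := by
      rw [Metric.mem_ball, dist_eq_norm]
      have : x + t • d - x = t • d := by abel
      rw [this, norm_smul, Real.norm_eq_abs]
      calc |t| * ‖d‖ < (r / ‖d‖) * ‖d‖ := by gcongr
        _ = r := by field_simp
    have hxmem : x ∈ Metric.ball x r := Metric.mem_ball_self hr
    have hsub : segment ℝ x (x + t • d) ⊆ Ω :=
      ((convex_ball x r).segment_subset hxmem hxt).trans hball
    have hlip := lip_est hΩ hg hC hae hx (hball hxt) hsub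
    have hnorm : ‖x + t • d - x‖ = |t| * ‖d‖ := by
      have : x + t • d - x = t • d := by abel
      rw [this, norm_smul, Real.norm_eq_abs]
    rw [hnorm] at hlip
    have hslope : slope (fun t : ℝ => g (x + t • d)) 0 t
        = (g (x + t • d) - g (x + (0:ℝ) • d)) / t := by
      rw [slope_def_field]; ring_nf
    rw [hslope]
    have h0 : x + (0:ℝ) • d = x := by simp
    rw [h0, abs_div]
    rw [div_le_iff₀ (by positivity : (0:ℝ) < |t|)]
    calc |g (x + t • d) - g x| ≤ C * (|t| * ‖d‖) := hlip
      _ = C * ‖d‖ * |t| := by ring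
  have := le_of_tendsto hder.abs hev
  simpa [Real.norm_eq_abs] using this
theorem stmt_12 {n : ℕ} (Ω : Set (EuclideanSpace ℝ (Fin n))) (hΩ : IsOpen Ω)
    (f : ℕ → EuclideanSpace ℝ (Fin n) → ℝ)
    (F : EuclideanSpace ℝ (Fin n) → ℝ)
    (hdiff : ∀ m, ∀ x ∈ Ω, DifferentiableAt ℝ (f m) x)
    (hcauchy : UniformCauchySeqOn f atTop Ω)
    (hgradCauchy : Tendsto
      (fun p : ℕ × ℕ =>
        essSup (fun x => (‖fderiv ℝ (f p.1) x - fderiv ℝ (f p.2) x‖₊ : ℝ≥0∞))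
          (volume.restrict Ω))
      atTop (nhds 0))
    (hlim : TendstoUniformlyOn f F atTop Ω) :
    (∀ x ∈ Ω, DifferentiableAt ℝ F x) ∧
      TendstoUniformlyOn f F atTop Ω ∧
      TendstoUniformlyOn (fun m x => fderiv ℝ (f m) x) (fun x => fderiv ℝ F x) atTop Ω := by
  classical
  -- Step 1: the derivatives form a uniformly Cauchy sequence on Ω
  have hUC : UniformCauchySeqOn (fun m x => fderiv ℝ (f m) x) atTop Ω := by
    rw [Metric.uniformCauchySeqOn_iff]
    intro ε hε
    rw [ENNReal.tendsto_nhds_zero] at hgradCauchy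
    have hev := hgradCauchy (ENNReal.ofReal (ε/2)) (by simp [ENNReal.ofReal_pos]; positivity)
    rw [Filter.eventually_atTop] at hev
    obtain ⟨N, hN⟩ := hev
    refine ⟨max N.1 N.2, fun m hm k hk x hx => ?_⟩
    have hp : (m, k) ≥ N :=
      ⟨le_trans (le_max_left _ _) hm, le_trans (le_max_right _ _) hk⟩
    have hess := hN (m, k) hp
    -- a.e. bound on the derivative of the difference
    have haebound : ∀ᵐ y ∂(volume.restrict Ω),
        ‖fderiv ℝ (f m) y - fderiv ℝ (f k) y‖ ≤ ε/2 := by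
      filter_upwards [ae_le_essSup
        (fun y => (‖fderiv ℝ (f m) y - fderiv ℝ (f k) y‖₊ : ℝ≥0∞))] with y hy
      have : (‖fderiv ℝ (f m) y - fderiv ℝ (f k) y‖₊ : ℝ≥0∞) ≤ ENNReal.ofReal (ε/2) :=
        hy.trans hess
      rw [← ENNReal.ofReal_coe_nnreal, coe_nnnorm] at this
      exact (ENNReal.ofReal_le_ofReal_iff (by positivity)).mp this
    set g : EuclideanSpace ℝ (Fin n) → ℝ := fun y => f m y - f k y with hg_def
    have hgdiff : ∀ y ∈ Ω, DifferentiableAt ℝ g y :=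
      fun y hy => (hdiff m y hy).sub (hdiff k y hy)
    have hgfderiv : ∀ y ∈ Ω, fderiv ℝ g y = fderiv ℝ (f m) y - fderiv ℝ (f k) y :=
      fun y hy => fderiv_sub (hdiff m y hy) (hdiff k y hy)
    have haeg : ∀ᵐ y ∂(volume.restrict Ω), ‖fderiv ℝ g y‖ ≤ ε/2 := by
      filter_upwards [ae_restrict_mem hΩ.measurableSet, haebound] with y hyΩ hb
      rw [hgfderiv y hyΩ]; exact hb
    have := fderiv_bound hΩ hgdiff (by positivity) haeg hx
    rw [hgfderiv x hx] at this
    rw [dist_eq_norm]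
    calc ‖fderiv ℝ (f m) x - fderiv ℝ (f k) x‖ ≤ ε/2 := this
      _ < ε := by linarith
  -- Step 2: pointwise limit of the derivatives
  set g' : EuclideanSpace ℝ (Fin n) → (EuclideanSpace ℝ (Fin n)) →L[ℝ] ℝ :=
    fun x => limUnder atTop (fun m => fderiv ℝ (f m) x) with hg'_def
  have hptlim : ∀ x ∈ Ω, Tendsto (fun m => fderiv ℝ (f m) x) atTop (𝓝 (g' x)) := by
    intro x hx
    have hcs : CauchySeq (fun m => fderiv ℝ (f m) x) := by
      rw [Metric.cauchySeq_iff]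
      intro ε hε
      obtain ⟨N, hN⟩ := Metric.uniformCauchySeqOn_iff.mp hUC ε hε
      exact ⟨N, fun m hm k hk => hN m hm k hk x hx⟩
    exact hcs.tendsto_limUnder
  have hunif : TendstoUniformlyOn (fun m x => fderiv ℝ (f m) x) g' atTop Ω :=
    hUC.tendstoUniformlyOn_of_tendsto hptlim
  -- Step 3: F has derivative g' on Ω
  have hkey : ∀ x ∈ Ω, HasFDerivAt F (g' x) x := fun x hx =>
    hasFDerivAt_of_tendstoUniformlyOn hΩ hunif
      (fun m y hy => (hdiff m y hy).hasFDerivAt) (fun y hy => hlim.tendsto_at hy) hx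
  refine ⟨fun x hx => (hkey x hx).differentiableAt, hlim, ?_⟩
  exact hunif.congr_right fun x hx => ((hkey x hx).fderiv).symm
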